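/- Let R = K[x_1][x_2; σ_2, δ_2]⋯[x_N; σ_N, δ_N] be a diagonalized iterated Ore extension (σ_k(x_j) = λ_{kj}x_j for j < k) satisfying δ_k(x_j) ∈ R_{[j+1,k-1]} for all j < k. Fix l ∈ [1, N−1], and suppose that for each k ∈ [l+1, N], x_k x_l − λ_{kl} x_l x_k ∈ R_{[l+1,N]}. Then R_{[l+1,N]} + x_l R_{[l+1,N]} = R_{[l+1,N]} + R_{[l+1,N]} x_l, and ∑_{a≥0} x_l^a R_{[l+1,N]} is a subalgebra of R. -/

import Mathlib

/-- The ordered monomial `x 0 ^ m 0 * x 1 ^ m 1 * ⋯ * x (N-1) ^ m (N-1)`. -/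
def orderedMonomial {R : Type*} [Ring R] {N : ℕ} (x : Fin N → R) (m : Fin N → ℕ) : R :=
  ((List.finRange N).map fun i => x i ^ m i).prod

/-- The reverse-ordered monomial `x (N-1) ^ m (N-1) * ⋯ * x 0 ^ m 0`. -/
def revMonomial {R : Type*} [Ring R] {N : ℕ} (x : Fin N → R) (m : Fin N → ℕ) : R :=
  (((List.finRange N).reverse).map fun i => x i ^ m i).prod

/-- `R` has the PBW property for the generators `x` : the ordered monomials form a
`K`-basis. -/
def IsPBW (K : Type*) {R : Type*} [Field K] [Ring R] [Algebra K R] {N : ℕ}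
    (x : Fin N → R) : Prop :=
  LinearIndependent K (orderedMonomial x) ∧
    Submodule.span K (Set.range (orderedMonomial x)) = ⊤

/-- The unital subalgebra `R_{[a,b]}` generated by the `x i` with `a ≤ i ≤ b`
(`0`-based indices, bounds taken in `ℤ`). -/
def genSub (K : Type*) {R : Type*} [Field K] [Ring R] [Algebra K R] {N : ℕ}
    (x : Fin N → R) (a b : ℤ) : Subalgebra K R :=
  Algebra.adjoin K {r | ∃ i : Fin N, a ≤ (i : ℤ) ∧ (i : ℤ) ≤ b ∧ r = x i}

/-- A diagonalized iterated Ore extension: PBW basis plus relations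
`x k * x j = λ_{kj} x j x k + δ_k(x_j)` with `δ_k(x_j) ∈ R_{[1,k-1]}`. -/
def IsDiagonalizedIOE (K : Type*) {R : Type*} [Field K] [Ring R] [Algebra K R] {N : ℕ}
    (x : Fin N → R) (lam : Fin N → Fin N → Kˣ) : Prop :=
  IsPBW K x ∧
    ∀ j k : Fin N, j < k →
      x k * x j - (lam k j : K) • (x j * x k) ∈ genSub K x 0 ((k : ℤ) - 1)

/-- Multiplicative skew-symmetry of the `λ`-matrix. -/
def MulSkewSymm {K : Type*} [Field K] {N : ℕ} (lam : Fin N → Fin N → Kˣ) : Prop :=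
  (∀ i, lam i i = 1) ∧ ∀ i j, lam j i = (lam i j)⁻¹

/-- Reversibility: a presentation with the variables in descending order, i.e. the
reversed monomials form a basis and `δ*_j(x_k) = x j x k - λ_{jk} x k x j` lies in the
subalgebra generated by `x (j+1), …, x (N-1)`. -/
def IsReversible (K : Type*) {R : Type*} [Field K] [Ring R] [Algebra K R] {N : ℕ}
    (x : Fin N → R) (lam : Fin N → Fin N → Kˣ) : Prop :=
  (LinearIndependent K (revMonomial x) ∧
      Submodule.span K (Set.range (revMonomial x)) = ⊤) ∧
    ∀ j k : Fin N, j < k →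
      x j * x k - (lam j k : K) • (x k * x j) ∈ genSub K x ((j : ℤ) + 1) (N - 1)


section Aux

variable {K R : Type*} [Field K] [Ring R] [Algebra K R] {N : ℕ}

lemma gen_mem_genSub (x : Fin N → R) (K : Type*) [Field K] [Algebra K R]
    {l k : Fin N} (hk : l < k) :
    x k ∈ genSub K x ((l : ℤ) + 1) ((N : ℤ) - 1) := by
  have h1 : (l : ℕ) < (k : ℕ) := hk
  have h2 : (k : ℕ) < N := k.isLt
  exact Algebra.subset_adjoin ⟨k, by omega, by omega, rfl⟩

/-- `x l * s ∈ S + S * x l` for `s ∈ S`. -/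
lemma xl_mul_mem (x : Fin N → R) (lam : Fin N → Fin N → Kˣ) (l : Fin N)
    (hl : ∀ k : Fin N, l < k →
      x k * x l - (lam k l : K) • (x l * x k) ∈ genSub K x ((l : ℤ) + 1) ((N : ℤ) - 1))
    {s : R} (hs : s ∈ genSub K x ((l : ℤ) + 1) ((N : ℤ) - 1)) :
    x l * s ∈ (genSub K x ((l : ℤ) + 1) ((N : ℤ) - 1)).toSubmodule ⊔
      Submodule.map (LinearMap.mulRight K (x l))
        (genSub K x ((l : ℤ) + 1) ((N : ℤ) - 1)).toSubmodule := by
  set S := genSub K x ((l : ℤ) + 1) ((N : ℤ) - 1) with hSdef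
  set M := S.toSubmodule ⊔
      Submodule.map (LinearMap.mulRight K (x l)) S.toSubmodule with hMdef
  have hs' : s ∈ Algebra.adjoin K
      {r | ∃ i : Fin N, (l : ℤ) + 1 ≤ (i : ℤ) ∧ (i : ℤ) ≤ (N : ℤ) - 1 ∧ r = x i} := hs
  clear hs
  induction hs' using Algebra.adjoin_induction with
  | mem r hr =>
    obtain ⟨k, hk1, hk2, rfl⟩ := hr
    have hlk : l < k := by
      have : ((l : ℕ) : ℤ) + 1 ≤ ((k : ℕ) : ℤ) := hk1
      have : (l : ℕ) < (k : ℕ) := by omega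
      exact this
    have hd := hl k hlk
    set c : K := (lam k l : K) with hc
    have hc0 : c ≠ 0 := Units.ne_zero _
    set d : R := x k * x l - c • (x l * x k) with hdd
    have key : x l * x k = (c⁻¹ • x k) * x l - c⁻¹ • d := by
      rw [smul_mul_assoc, hdd, smul_sub, smul_smul, inv_mul_cancel₀ hc0, one_smul]
      abel
    rw [key]
    refine sub_mem ?_ ?_
    · exact Submodule.mem_sup_right ⟨c⁻¹ • x k,
        S.toSubmodule.smul_mem _ (gen_mem_genSub x K hlk), rfl⟩
    · exact Submodule.mem_sup_left (S.toSubmodule.smul_mem _ hd)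
  | algebraMap r =>
    rw [← Algebra.commutes r (x l)]
    exact Submodule.mem_sup_right ⟨algebraMap K R r, S.algebraMap_mem r, rfl⟩
  | add a b ha hb iha ihb =>
    rw [mul_add]; exact add_mem iha ihb
  | mul a b ha hb iha ihb =>
    have hbS : b ∈ S := hb
    rw [← mul_assoc]
    obtain ⟨u, hu, w, hw, huw⟩ := Submodule.mem_sup.mp iha
    obtain ⟨v, hv, rfl⟩ := hw
    obtain ⟨p, hp, q, hq, hpq⟩ := Submodule.mem_sup.mp ihb
    obtain ⟨r, hr, rfl⟩ := hq
    have expand : (x l * a) * b = u * b + v * p + (v * r) * x l := by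
      rw [← huw]
      simp only [LinearMap.mulRight_apply]
      rw [add_mul, mul_assoc v (x l) b, ← hpq]
      simp only [LinearMap.mulRight_apply]
      rw [mul_add, ← mul_assoc]
      abel
    rw [expand]
    refine add_mem (add_mem ?_ ?_) ?_
    · exact Submodule.mem_sup_left (S.mul_mem hu hbS)
    · exact Submodule.mem_sup_left (S.mul_mem hv hp)
    · exact Submodule.mem_sup_right ⟨v * r, S.mul_mem hv hr, rfl⟩

/-- `s * x l ∈ S + x l * S` for `s ∈ S`. -/
lemma mul_xl_mem (x : Fin N → R) (lam : Fin N → Fin N → Kˣ) (l : Fin N)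
    (hl : ∀ k : Fin N, l < k →
      x k * x l - (lam k l : K) • (x l * x k) ∈ genSub K x ((l : ℤ) + 1) ((N : ℤ) - 1))
    {s : R} (hs : s ∈ genSub K x ((l : ℤ) + 1) ((N : ℤ) - 1)) :
    s * x l ∈ (genSub K x ((l : ℤ) + 1) ((N : ℤ) - 1)).toSubmodule ⊔
      Submodule.map (LinearMap.mulLeft K (x l))
        (genSub K x ((l : ℤ) + 1) ((N : ℤ) - 1)).toSubmodule := by
  set S := genSub K x ((l : ℤ) + 1) ((N : ℤ) - 1) with hSdef
  have hs' : s ∈ Algebra.adjoin K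
      {r | ∃ i : Fin N, (l : ℤ) + 1 ≤ (i : ℤ) ∧ (i : ℤ) ≤ (N : ℤ) - 1 ∧ r = x i} := hs
  clear hs
  induction hs' using Algebra.adjoin_induction with
  | mem r hr =>
    obtain ⟨k, hk1, hk2, rfl⟩ := hr
    have hlk : l < k := by
      have : ((l : ℕ) : ℤ) + 1 ≤ ((k : ℕ) : ℤ) := hk1
      have : (l : ℕ) < (k : ℕ) := by omega
      exact this
    have hd := hl k hlk
    set c : K := (lam k l : K) with hc
    set d : R := x k * x l - c • (x l * x k) with hdd
    have key : x k * x l = d + x l * (c • x k) := by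
      rw [mul_smul_comm, hdd]; abel
    rw [key]
    refine add_mem (Submodule.mem_sup_left hd) ?_
    exact Submodule.mem_sup_right ⟨c • x k,
      S.toSubmodule.smul_mem _ (gen_mem_genSub x K hlk), rfl⟩
  | algebraMap r =>
    rw [Algebra.commutes r (x l)]
    exact Submodule.mem_sup_right ⟨algebraMap K R r, S.algebraMap_mem r, rfl⟩
  | add a b ha hb iha ihb =>
    rw [add_mul]; exact add_mem iha ihb
  | mul a b ha hb iha ihb =>
    have haS : a ∈ S := ha
    rw [mul_assoc]
    obtain ⟨u, hu, w, hw, huw⟩ := Submodule.mem_sup.mp ihb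
    obtain ⟨v, hv, rfl⟩ := hw
    obtain ⟨p, hp, q, hq, hpq⟩ := Submodule.mem_sup.mp iha
    obtain ⟨r, hr, rfl⟩ := hq
    have expand : a * (b * x l) = a * u + p * v + x l * (r * v) := by
      rw [← huw]
      simp only [LinearMap.mulLeft_apply]
      rw [mul_add, ← mul_assoc a (x l) v, ← hpq]
      simp only [LinearMap.mulLeft_apply]
      rw [add_mul, mul_assoc]
      abel
    rw [expand]
    refine add_mem (add_mem ?_ ?_) ?_
    · exact Submodule.mem_sup_left (S.mul_mem haS hu)
    · exact Submodule.mem_sup_left (S.mul_mem hp hv)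
    · exact Submodule.mem_sup_right ⟨r * v, S.mul_mem hr hv, rfl⟩

end Aux
theorem left_right_coset_eq_and_subalgebra {K R : Type*} [Field K] [Ring R]
    [Algebra K R] {N : ℕ} (x : Fin N → R) (lam : Fin N → Fin N → Kˣ)
    (hdiag : IsDiagonalizedIOE K x lam) (hskew : MulSkewSymm lam)
    (hδ : ∀ j k : Fin N, j < k →
      x k * x j - (lam k j : K) • (x j * x k) ∈
        genSub K x ((j : ℤ) + 1) ((k : ℤ) - 1))
    (l : Fin N)
    (hl : ∀ k : Fin N, l < k →
      x k * x l - (lam k l : K) • (x l * x k) ∈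
        genSub K x ((l : ℤ) + 1) ((N : ℤ) - 1)) :
    ((genSub K x ((l : ℤ) + 1) ((N : ℤ) - 1)).toSubmodule ⊔
        Submodule.map (LinearMap.mulLeft K (x l))
          (genSub K x ((l : ℤ) + 1) ((N : ℤ) - 1)).toSubmodule =
      (genSub K x ((l : ℤ) + 1) ((N : ℤ) - 1)).toSubmodule ⊔
        Submodule.map (LinearMap.mulRight K (x l))
          (genSub K x ((l : ℤ) + 1) ((N : ℤ) - 1)).toSubmodule) ∧
    (∃ T : Subalgebra K R, T.toSubmodule =
      ⨆ a : ℕ, Submodule.map (LinearMap.mulLeft K (x l ^ a))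
        (genSub K x ((l : ℤ) + 1) ((N : ℤ) - 1)).toSubmodule) := by
  set S := genSub K x ((l : ℤ) + 1) ((N : ℤ) - 1) with hSdef
  constructor
  · apply le_antisymm
    · refine sup_le le_sup_left ?_
      rintro y ⟨s, hs, rfl⟩
      exact xl_mul_mem x lam l hl hs
    · refine sup_le le_sup_left ?_
      rintro y ⟨s, hs, rfl⟩
      exact mul_xl_mem x lam l hl hs
  · set P : Submodule K R :=
      ⨆ a : ℕ, Submodule.map (LinearMap.mulLeft K (x l ^ a)) S.toSubmodule with hPdef
    have hmem : ∀ (a : ℕ) (s : R), s ∈ S → x l ^ a * s ∈ P := fun a s hs =>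
      Submodule.mem_iSup_of_mem a ⟨s, hs, rfl⟩
    have hxP : ∀ y ∈ P, x l * y ∈ P := by
      intro y hy
      refine Submodule.iSup_induction (motive := fun z => x l * z ∈ P) _ hy
        (fun a z hz => ?_) ?_ (fun u v hu hv => ?_)
      · obtain ⟨s, hs, rfl⟩ := hz
        show x l * (x l ^ a * s) ∈ P
        rw [← mul_assoc, ← pow_succ']
        exact hmem _ _ hs
      · show x l * 0 ∈ P
        rw [mul_zero]; exact P.zero_mem
      · show x l * (u + v) ∈ P
        rw [mul_add]; exact P.add_mem hu hv
    have hxaP : ∀ (a : ℕ) (y : R), y ∈ P → x l ^ a * y ∈ P := by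
      intro a
      induction a with
      | zero => intro y hy; rwa [pow_zero, one_mul]
      | succ a ih =>
        intro y hy
        rw [pow_succ', mul_assoc]
        exact hxP _ (ih y hy)
    have hPt : ∀ t ∈ S, ∀ y ∈ P, y * t ∈ P := by
      intro t ht y hy
      refine Submodule.iSup_induction (motive := fun z => z * t ∈ P) _ hy
        (fun a z hz => ?_) ?_ (fun u v hu hv => ?_)
      · obtain ⟨s, hs, rfl⟩ := hz
        show (x l ^ a * s) * t ∈ P
        rw [mul_assoc]
        exact hmem _ _ (S.mul_mem hs ht)
      · show (0 : R) * t ∈ P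
        rw [zero_mul]; exact P.zero_mem
      · show (u + v) * t ∈ P
        rw [add_mul]; exact P.add_mem hu hv
    have hQ : ∀ (b : ℕ) (s : R), s ∈ S → s * x l ^ b ∈ P := by
      intro b
      induction b with
      | zero =>
        intro s hs
        rw [pow_zero, mul_one]
        have := hmem 0 s hs
        rwa [pow_zero, one_mul] at this
      | succ b ih =>
        intro s hs
        obtain ⟨u, hu, w, hw, huw⟩ := Submodule.mem_sup.mp (mul_xl_mem x lam l hl hs)
        obtain ⟨v, hv, rfl⟩ := hw
        have key : s * x l ^ (b + 1) = u * x l ^ b + x l * (v * x l ^ b) := by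
          rw [pow_succ', ← mul_assoc, ← huw]
          simp only [LinearMap.mulLeft_apply]
          rw [add_mul, mul_assoc]
        rw [key]
        exact P.add_mem (ih u hu) (hxP _ (ih v hv))
    have hmul : ∀ m n : R, m ∈ P → n ∈ P → m * n ∈ P := by
      intro m n hm hn
      refine Submodule.iSup_induction (motive := fun z => z * n ∈ P) _ hm
        (fun a z hz => ?_) ?_ (fun u v hu hv => ?_)
      · obtain ⟨s, hs, rfl⟩ := hz
        show (x l ^ a * s) * n ∈ P
        rw [mul_assoc]
        refine hxaP a _ ?_
        refine Submodule.iSup_induction (motive := fun z => s * z ∈ P) _ hn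
          (fun b z hz => ?_) ?_ (fun u v hu hv => ?_)
        · obtain ⟨t, ht, rfl⟩ := hz
          show s * (x l ^ b * t) ∈ P
          rw [← mul_assoc]
          exact hPt t ht _ (hQ b s hs)
        · show s * 0 ∈ P
          rw [mul_zero]; exact P.zero_mem
        · show s * (u + v) ∈ P
          rw [mul_add]; exact P.add_mem hu hv
      · show (0 : R) * n ∈ P
        rw [zero_mul]; exact P.zero_mem
      · show (u + v) * n ∈ P
        rw [add_mul]; exact P.add_mem hu hv
    have h1 : (1 : R) ∈ P := by
      have := hmem 0 1 (one_mem S)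
      rwa [pow_zero, one_mul] at this
    exact ⟨P.toSubalgebra h1 hmul, rfl⟩
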